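/- For every r ∈ ℕ and every 0 ≤ z ≤ r, the preference system pref(ℝ^r) = [ℝ^r, R₁*, R₂*] is consistent, i.e., there exists a function u : ℝ^r → ℝ such that (x,y) ∈ R₁* implies u(x) ≥ u(y) with equality iff (x,y) ∈ I_{R₁*}, and ((x,y),(x',y')) ∈ R₂* implies u(x) − u(y) ≥ u(x') − u(y') with equality iff ((x,y),(x',y')) ∈ I_{R₂*}. -/

import Mathlib

open MeasureTheory
open scoped BigOperators

namespace GSD

/-- The strict part `P_R` of a binary relation `R`. -/
def strictPart {α : Type*} (R : α → α → Prop) (a b : α) : Prop := R a b ∧ ¬ R b a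

/-- The indifference part `I_R` of a binary relation `R`. -/
def indiffPart {α : Type*} (R : α → α → Prop) (a b : α) : Prop := R a b ∧ R b a

/-- `[A, R1, R2]` is a preference system: `R1` is a preorder on `A` and `R2` is a preorder
on `R1` (i.e. a reflexive-transitive relation supported on pairs belonging to `R1`). -/
structure IsPrefSystem {A : Type*} (R1 : A → A → Prop) (R2 : A × A → A × A → Prop) : Prop where
  refl1 : ∀ a, R1 a a
  trans1 : ∀ a b c, R1 a b → R1 b c → R1 a c
  sub2 : ∀ p q, R2 p q → R1 p.1 p.2 ∧ R1 q.1 q.2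
  refl2 : ∀ p, R1 p.1 p.2 → R2 p p
  trans2 : ∀ p q r, R2 p q → R2 q r → R2 p r

/-- `u` is a representation of the preference system `[A, R1, R2]`. -/
def IsRepresentation {A : Type*} (R1 : A → A → Prop) (R2 : A × A → A × A → Prop)
    (u : A → ℝ) : Prop :=
  (∀ a b, R1 a b → (u b ≤ u a ∧ (u a = u b ↔ R1 b a))) ∧
  (∀ a b c d, R2 (a, b) (c, d) →
    (u c - u d ≤ u a - u b ∧ (u a - u b = u c - u d ↔ R2 (c, d) (a, b))))

/-- A preference system is consistent if it admits a representation. -/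
def Consistent {A : Type*} (R1 : A → A → Prop) (R2 : A × A → A × A → Prop) : Prop :=
  ∃ u, IsRepresentation R1 R2 u

/-- The preference system is bounded with minimal element `a0` and maximal element `a1`. -/
def Bounded {A : Type*} (R1 : A → A → Prop) (a0 a1 : A) : Prop :=
  (∀ a, R1 a1 a) ∧ (∀ a, R1 a a0) ∧ strictPart R1 a1 a0

/-- Membership in the normalized representation set `𝒩_𝒜`. -/
def NormRep {A : Type*} (R1 : A → A → Prop) (R2 : A × A → A × A → Prop) (a0 a1 : A)
    (u : A → ℝ) : Prop :=
  IsRepresentation R1 R2 u ∧ u a0 = 0 ∧ u a1 = 1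

/-- Membership in `𝒩^δ_𝒜`: normalized representations separating strict pairs by at least `δ`. -/
def NormRepDelta {A : Type*} (R1 : A → A → Prop) (R2 : A × A → A × A → Prop) (a0 a1 : A)
    (δ : ℝ) (u : A → ℝ) : Prop :=
  NormRep R1 R2 a0 a1 u ∧
  (∀ a b, strictPart R1 a b → δ ≤ u a - u b) ∧
  (∀ c d e f, strictPart R2 (c, d) (e, f) → δ ≤ u c - u d - u e + u f)

/-- The relation `R₁*` of `pref(ℝ^r)`: componentwise dominance. -/
def R1star (r : ℕ) (x y : Fin r → ℝ) : Prop := ∀ j, y j ≤ x j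

/-- The relation `R₂*` of `pref(ℝ^r)` with the first `z` dimensions cardinal and the
remaining ones ordinal. -/
def R2star (r z : ℕ) (p q : (Fin r → ℝ) × (Fin r → ℝ)) : Prop :=
  R1star r p.1 p.2 ∧ R1star r q.1 q.2 ∧
  (∀ j : Fin r, (j : ℕ) < z → q.1 j - q.2 j ≤ p.1 j - p.2 j) ∧
  (∀ j : Fin r, z ≤ (j : ℕ) → p.2 j ≤ q.2 j ∧ q.2 j ≤ q.1 j ∧ q.1 j ≤ p.1 j)

/-- Proposition 7 i): `pref(ℝ^r)` is consistent for every `r` and `0 ≤ z ≤ r`. -/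
theorem stmt12 (r z : ℕ) (hz : z ≤ r) :
    ∃ u : (Fin r → ℝ) → ℝ, IsRepresentation (R1star r) (R2star r z) u := by
  set f : Fin r → ℝ → ℝ := fun j t => if (j : ℕ) < z then t else Real.arctan t with hf
  have hsm : ∀ j : Fin r, StrictMono (f j) := by
    intro j
    by_cases h : (j : ℕ) < z
    · intro x y hxy; simpa [hf, h] using hxy
    · simpa [hf, h] using Real.arctan_strictMono
  refine ⟨fun x => ∑ j : Fin r, f j (x j), ?_, ?_⟩
  · intro a b hab
    have hterm : ∀ j, f j (b j) ≤ f j (a j) := fun j => (hsm j).monotone (hab j)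
    have hnn : ∀ j ∈ Finset.univ, (0:ℝ) ≤ f j (a j) - f j (b j) :=
      fun j _ => by linarith [hterm j]
    have hsum : (∑ j : Fin r, f j (a j)) - (∑ j : Fin r, f j (b j))
        = ∑ j : Fin r, (f j (a j) - f j (b j)) := (Finset.sum_sub_distrib _ _).symm
    have hge : (0:ℝ) ≤ ∑ j : Fin r, (f j (a j) - f j (b j)) := Finset.sum_nonneg hnn
    refine ⟨by linarith, ?_, ?_⟩
    · intro heq
      have h0 : ∑ j : Fin r, (f j (a j) - f j (b j)) = 0 := by linarith
      rw [Finset.sum_eq_zero_iff_of_nonneg hnn] at h0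
      intro j
      have hj := h0 j (Finset.mem_univ j)
      have : f j (a j) = f j (b j) := by linarith
      exact le_of_eq ((hsm j).injective this)
    · intro hba
      have : a = b := funext fun j => le_antisymm (hba j) (hab j)
      rw [this]
  · intro a b c d hR2
    obtain ⟨h1, h2, h3, h4⟩ := hR2
    set g : Fin r → ℝ := fun j => f j (a j) - f j (b j) - f j (c j) + f j (d j) with hg
    have hnn : ∀ j ∈ Finset.univ, (0:ℝ) ≤ g j := by
      intro j _
      by_cases hj : (j : ℕ) < z
      · have := h3 j hj
        simp only [hg, hf, if_pos hj]
        linarith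
      · have h4j := h4 j (le_of_not_gt hj)
        have e1 : Real.arctan (c j) ≤ Real.arctan (a j) :=
          Real.arctan_strictMono.monotone h4j.2.2
        have e2 : Real.arctan (b j) ≤ Real.arctan (d j) :=
          Real.arctan_strictMono.monotone h4j.1
        simp only [hg, hf, if_neg hj]
        linarith
    have hsum : ((∑ j : Fin r, f j (a j)) - ∑ j : Fin r, f j (b j))
        - ((∑ j : Fin r, f j (c j)) - ∑ j : Fin r, f j (d j))
        = ∑ j : Fin r, g j := by
      rw [← Finset.sum_sub_distrib, ← Finset.sum_sub_distrib, ← Finset.sum_sub_distrib]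
      apply Finset.sum_congr rfl
      intro j _
      simp only [hg]; ring
    have hge : (0:ℝ) ≤ ∑ j : Fin r, g j := Finset.sum_nonneg hnn
    refine ⟨by linarith, ?_, ?_⟩
    · intro heq
      have h0 : ∑ j : Fin r, g j = 0 := by linarith
      rw [Finset.sum_eq_zero_iff_of_nonneg hnn] at h0
      have key : ∀ j : Fin r, ((j : ℕ) < z → a j - b j = c j - d j) ∧
          (z ≤ (j : ℕ) → a j = c j ∧ b j = d j) := by
        intro j
        have hj0 := h0 j (Finset.mem_univ j)
        constructor
        · intro hj
          simp only [hg, hf, if_pos hj] at hj0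
          linarith
        · intro hj
          have hj' : ¬ (j : ℕ) < z := not_lt.mpr hj
          simp only [hg, hf, if_neg hj'] at hj0
          have h4j := h4 j hj
          have e1 : Real.arctan (c j) ≤ Real.arctan (a j) :=
            Real.arctan_strictMono.monotone h4j.2.2
          have e2 : Real.arctan (b j) ≤ Real.arctan (d j) :=
            Real.arctan_strictMono.monotone h4j.1
          have ea : Real.arctan (a j) = Real.arctan (c j) := by linarith
          have eb : Real.arctan (b j) = Real.arctan (d j) := by linarith
          exact ⟨Real.arctan_injective ea, Real.arctan_injective eb⟩
      refine ⟨h2, h1, ?_, ?_⟩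
      · intro j hj
        have := (key j).1 hj
        simp only
        linarith
      · intro j hj
        obtain ⟨ea, eb⟩ := (key j).2 hj
        have := h1 j
        simp only at *
        exact ⟨le_of_eq eb.symm, by linarith, le_of_eq ea⟩
    · intro hR2'
      obtain ⟨_, _, h3', h4'⟩ := hR2'
      have h0 : ∑ j : Fin r, g j = 0 := by
        apply Finset.sum_eq_zero
        intro j _
        by_cases hj : (j : ℕ) < z
        · have e1 := h3 j hj
          have e2 := h3' j hj
          simp only [hg, hf, if_pos hj]
          simp only at e1 e2
          linarith
        · have hjz := le_of_not_gt hj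
          have e1 := h4 j hjz
          have e2 := h4' j hjz
          simp only at e1 e2
          have ea : a j = c j := le_antisymm e2.2.2 e1.2.2
          have eb : b j = d j := le_antisymm e1.1 e2.1
          simp only [hg, hf, if_neg hj, ea, eb]
          ring
      linarith

end GSD
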